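/- Heine-type formula (abstract form): Let $(X,\mu)$ be a measure space, $\zeta_0,\dots,\zeta_n$ functions on $X$ with all pairwise products integrable, and set $\mu_{a,b}=\int_X\zeta_a\zeta_b\,d\mu$. Define $\Psi_n(p)=\int_{X^n}\det[\zeta_{a-1}(p_b)]_{a,b=1}^{n+1}\,\det[\zeta_{a-1}(p_b)]_{a,b=1}^{n}\,\prod_{j=1}^n d\mu(p_j)$ where $p_{n+1}=p$. Then $\Psi_n(p)=n!\,\det\begin{pmatrix}\mu_{0,0}&\cdots&\mu_{0,n}\\ \vdots&&\vdots\\ \mu_{n-1,0}&\cdots&\mu_{n-1,n}\\ \zeta_0(p)&\cdots&\zeta_n(p)\end{pmatrix}$, and consequently $\int_X\Psi_n(p)\,\zeta_j(p)\,d\mu(p)=0$ for all $0\le j\le n-1$. -/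

import Mathlib

open MeasureTheory Matrix BigOperators

noncomputable def extP {n : ℕ} (τ : Equiv.Perm (Fin n)) : Equiv.Perm (Fin (n+1)) :=
  (finSuccEquivLast.symm).permCongr τ.optionCongr

@[simp] lemma extP_last {n : ℕ} (τ : Equiv.Perm (Fin n)) : extP τ (Fin.last n) = Fin.last n := by
  simp [extP, Equiv.permCongr_apply]

@[simp] lemma extP_castSucc {n : ℕ} (τ : Equiv.Perm (Fin n)) (b : Fin n) :
    extP τ (Fin.castSucc b) = Fin.castSucc (τ b) := by
  simp [extP, Equiv.permCongr_apply]

@[simp] lemma sign_extP {n : ℕ} (τ : Equiv.Perm (Fin n)) :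
    Equiv.Perm.sign (extP τ) = Equiv.Perm.sign τ := by
  simp [extP, Equiv.Perm.sign_permCongr, Equiv.optionCongr_sign]

lemma heine_pointwise {X : Type*} [MeasurableSpace X] (μ : Measure X) [SigmaFinite μ]
    (n : ℕ) (ζ : Fin (n + 1) → X → ℂ)
    (hint : ∀ a b, Integrable (fun x => ζ a x * ζ b x) μ) (p : X) :
    (∫ x : Fin n → X,
        (Matrix.det (Matrix.of fun a b : Fin (n + 1) =>
          ζ a (Fin.lastCases p (fun j : Fin n => x j) b))) *
        (Matrix.det (Matrix.of fun a b : Fin n => ζ a.castSucc (x b)))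
        ∂(Measure.pi fun _ : Fin n => μ)) = (n.factorial : ℂ) *
      Matrix.det (Matrix.of fun j ℓ : Fin (n + 1) =>
        Fin.lastCases (ζ ℓ p)
          (fun i : Fin n => ∫ x, ζ i.castSucc x * ζ ℓ x ∂μ) j) := by
  letI : MeasureSpace X := ⟨μ⟩
  set m : Fin n → Fin (n+1) → ℂ := fun i ℓ => ∫ x, ζ i.castSucc x * ζ ℓ x ∂μ with hm
  -- Step 1 : expand integrand
  have h1 : ∀ x : Fin n → X,
      (Matrix.det (Matrix.of fun a b : Fin (n + 1) =>
          ζ a (Fin.lastCases p (fun j : Fin n => x j) b))) *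
        (Matrix.det (Matrix.of fun a b : Fin n => ζ a.castSucc (x b)))
      = ∑ σ : Equiv.Perm (Fin (n+1)), ∑ τ : Equiv.Perm (Fin n),
          (((Equiv.Perm.sign σ : ℤ) : ℂ) * ((Equiv.Perm.sign τ : ℤ) : ℂ)
            * ζ (σ (Fin.last n)) p) *
          ∏ b : Fin n, (ζ (σ b.castSucc) (x b) * ζ ((τ b).castSucc) (x b)) := by
    intro x
    rw [Matrix.det_apply', Matrix.det_apply', Finset.sum_mul_sum]
    refine Finset.sum_congr rfl fun σ _ => Finset.sum_congr rfl fun τ _ => ?_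
    rw [Fin.prod_univ_castSucc (f := fun b => (Matrix.of fun a b : Fin (n + 1) =>
          ζ a (Fin.lastCases p (fun j : Fin n => x j) b)) (σ b) b)]
    simp only [Matrix.of_apply, Fin.lastCases_castSucc, Fin.lastCases_last,
      Finset.prod_mul_distrib]
    ring
  simp_rw [h1]
  -- Step 2 : integrate term by term
  have hig : ∀ (σ : Equiv.Perm (Fin (n+1))) (τ : Equiv.Perm (Fin n)),
      Integrable (fun x : Fin n → X =>
        (((Equiv.Perm.sign σ : ℤ) : ℂ) * ((Equiv.Perm.sign τ : ℤ) : ℂ)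
            * ζ (σ (Fin.last n)) p) *
          ∏ b : Fin n, (ζ (σ b.castSucc) (x b) * ζ ((τ b).castSucc) (x b)))
        (Measure.pi fun _ : Fin n => μ) := by
    intro σ τ
    exact (Integrable.fintype_prod (f := fun b y => ζ (σ b.castSucc) y * ζ ((τ b).castSucc) y)
      (fun b => hint _ _)).const_mul _
  rw [integral_finset_sum _ (fun σ _ => integrable_finset_sum _ (fun τ _ => hig σ τ))]
  have h2 : ∀ σ : Equiv.Perm (Fin (n+1)),
      (∫ x : Fin n → X, ∑ τ : Equiv.Perm (Fin n),
        (((Equiv.Perm.sign σ : ℤ) : ℂ) * ((Equiv.Perm.sign τ : ℤ) : ℂ)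
            * ζ (σ (Fin.last n)) p) *
          ∏ b : Fin n, (ζ (σ b.castSucc) (x b) * ζ ((τ b).castSucc) (x b))
          ∂(Measure.pi fun _ : Fin n => μ))
      = ∑ τ : Equiv.Perm (Fin n),
        (((Equiv.Perm.sign σ : ℤ) : ℂ) * ((Equiv.Perm.sign τ : ℤ) : ℂ)
            * ζ (σ (Fin.last n)) p) *
          ∏ b : Fin n, m (τ b) (σ b.castSucc) := by
    intro σ
    rw [integral_finset_sum _ (fun τ _ => hig σ τ)]
    refine Finset.sum_congr rfl fun τ _ => ?_
    rw [integral_const_mul]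
    congr 1
    rw [show (∫ x : Fin n → X,
        ∏ b : Fin n, (ζ (σ b.castSucc) (x b) * ζ ((τ b).castSucc) (x b))
        ∂(Measure.pi fun _ : Fin n => μ))
      = ∏ b : Fin n, ∫ y, ζ (σ b.castSucc) y * ζ ((τ b).castSucc) y ∂μ from
      integral_fintype_prod_eq_prod
        (fun b y => ζ (σ b.castSucc) y * ζ ((τ b).castSucc) y)]
    refine Finset.prod_congr rfl fun b _ => ?_
    rw [hm]
    exact integral_congr_ae (Filter.Eventually.of_forall fun y => mul_comm _ _)
  simp_rw [h2]
  -- Step 3 : expand the RHS determinant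
  rw [← Matrix.det_transpose, Matrix.det_apply']
  have h3 : ∀ π : Equiv.Perm (Fin (n+1)),
      (∏ j : Fin (n+1), (Matrix.of fun j ℓ : Fin (n + 1) =>
        Fin.lastCases (ζ ℓ p) (fun i : Fin n => m i ℓ) j)ᵀ (π j) j)
      = (∏ i : Fin n, m i (π i.castSucc)) * ζ (π (Fin.last n)) p := by
    intro π
    rw [Fin.prod_univ_castSucc]
    simp [Matrix.transpose_apply]
  refine Eq.trans ?_ (congrArg ((n.factorial : ℂ) * ·)
    (Finset.sum_congr rfl fun π _ => congrArg (((Equiv.Perm.sign π : ℤ) : ℂ) * ·) (h3 π))).symm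
  -- Step 4 : combinatorics
  rw [Finset.sum_comm]
  have hs : ∀ τ : Equiv.Perm (Fin n),
      ((Equiv.Perm.sign τ : ℤ) : ℂ) * ((Equiv.Perm.sign τ : ℤ) : ℂ) = 1 := by
    intro τ
    rw [← Int.cast_mul, ← Units.val_mul, Int.units_mul_self]
    norm_num
  have h4 : ∀ τ : Equiv.Perm (Fin n),
      (∑ σ : Equiv.Perm (Fin (n+1)),
        (((Equiv.Perm.sign σ : ℤ) : ℂ) * ((Equiv.Perm.sign τ : ℤ) : ℂ)
            * ζ (σ (Fin.last n)) p) *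
          ∏ b : Fin n, m (τ b) (σ b.castSucc))
      = ∑ π : Equiv.Perm (Fin (n+1)),
        ((Equiv.Perm.sign π : ℤ) : ℂ) *
          ((∏ i : Fin n, m i (π i.castSucc)) * ζ (π (Fin.last n)) p) := by
    intro τ
    rw [← Equiv.sum_comp (Equiv.mulRight (extP τ))]
    refine Finset.sum_congr rfl fun π _ => ?_
    have e1 : ∀ b : Fin n, (Equiv.mulRight (extP τ) π) b.castSucc = π ((τ b).castSucc) := by
      intro b
      simp [Equiv.Perm.mul_apply]
    have e2 : (Equiv.mulRight (extP τ) π) (Fin.last n) = π (Fin.last n) := by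
      simp [Equiv.Perm.mul_apply]
    have e3 : ((Equiv.Perm.sign (Equiv.mulRight (extP τ) π) : ℤ) : ℂ)
        = ((Equiv.Perm.sign π : ℤ) : ℂ) * ((Equiv.Perm.sign τ : ℤ) : ℂ) := by
      have h6 : Equiv.Perm.sign ((Equiv.mulRight (extP τ)) π)
          = Equiv.Perm.sign π * Equiv.Perm.sign τ := by
        simp [Equiv.Perm.sign_mul]
      rw [h6]
      push_cast
      ring
    have e4 : (∏ b : Fin n, m (τ b) (π ((τ b).castSucc)))
        = ∏ i : Fin n, m i (π i.castSucc) :=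
      Equiv.prod_comp τ (fun i => m i (π i.castSucc))
    simp only [e1, e2, e3, e4]
    have h5 := hs τ
    ring_nf
    ring_nf at h5
    rw [h5]
    ring
  simp_rw [h4]
  rw [Finset.sum_const, nsmul_eq_mul, Finset.card_univ, Fintype.card_perm, Fintype.card_fin,
    Finset.mul_sum]



/-- Heine-type formula (Proposition 2.11): the multiple-integral section
`Ψₙ(p) = ∫_{Xⁿ} det[ζ_{a-1}(p_b)]_{(n+1)×(n+1)} det[ζ_{a-1}(p_b)]_{n×n} dμⁿ`
(with `p_{n+1} = p`) equals `n!` times the bordered Gram determinant, and is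
therefore orthogonal to `ζ₀,…,ζ_{n-1}`. -/
theorem stmt5 {X : Type*} [MeasurableSpace X] (μ : Measure X) [SigmaFinite μ]
    (n : ℕ) (ζ : Fin (n + 1) → X → ℂ)
    (hint : ∀ a b, Integrable (fun x => ζ a x * ζ b x) μ)
    (Ψ : X → ℂ)
    (hΨ : ∀ p : X, Ψ p =
      ∫ x : Fin n → X,
        (Matrix.det (Matrix.of fun a b : Fin (n + 1) =>
          ζ a (Fin.lastCases p (fun j : Fin n => x j) b))) *
        (Matrix.det (Matrix.of fun a b : Fin n => ζ a.castSucc (x b)))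
        ∂(Measure.pi fun _ : Fin n => μ)) :
    (∀ p : X, Ψ p = (n.factorial : ℂ) *
      Matrix.det (Matrix.of fun j ℓ : Fin (n + 1) =>
        Fin.lastCases (ζ ℓ p)
          (fun i : Fin n => ∫ x, ζ i.castSucc x * ζ ℓ x ∂μ) j)) ∧
    (∀ j : Fin n, ∫ p, Ψ p * ζ j.castSucc p ∂μ = 0) := by
  have part1 : ∀ p : X, Ψ p = (n.factorial : ℂ) *
      Matrix.det (Matrix.of fun j ℓ : Fin (n + 1) =>
        Fin.lastCases (ζ ℓ p)
          (fun i : Fin n => ∫ x, ζ i.castSucc x * ζ ℓ x ∂μ) j) :=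
    fun p => (hΨ p).trans (heine_pointwise μ n ζ hint p)
  refine ⟨part1, fun j => ?_⟩
  set m : Fin n → Fin (n+1) → ℂ := fun i ℓ => ∫ x, ζ i.castSucc x * ζ ℓ x ∂μ with hm
  -- pointwise expansion of Ψ p * ζ j.castSucc p
  have hfun : ∀ p : X, Ψ p * ζ j.castSucc p = ∑ π : Equiv.Perm (Fin (n+1)),
      ((n.factorial : ℂ) * ((Equiv.Perm.sign π : ℤ) : ℂ) * ∏ i : Fin n, m i (π i.castSucc))
        * (ζ (π (Fin.last n)) p * ζ j.castSucc p) := by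
    intro p
    rw [part1 p, ← Matrix.det_transpose, Matrix.det_apply', Finset.mul_sum, Finset.sum_mul]
    refine Finset.sum_congr rfl fun π _ => ?_
    rw [Fin.prod_univ_castSucc]
    simp only [Matrix.transpose_apply, Matrix.of_apply, Fin.lastCases_castSucc,
      Fin.lastCases_last]
    ring
  rw [integral_congr_ae (Filter.Eventually.of_forall hfun),
    integral_finset_sum _ (fun π _ => (hint (π (Fin.last n)) j.castSucc).const_mul _)]
  have hterm : ∀ π : Equiv.Perm (Fin (n+1)),
      (∫ p, ((n.factorial : ℂ) * ((Equiv.Perm.sign π : ℤ) : ℂ)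
          * ∏ i : Fin n, m i (π i.castSucc))
        * (ζ (π (Fin.last n)) p * ζ j.castSucc p) ∂μ)
      = (n.factorial : ℂ) * (((Equiv.Perm.sign π : ℤ) : ℂ)
          * ((∏ i : Fin n, m i (π i.castSucc)) * m j (π (Fin.last n)))) := by
    intro π
    rw [integral_const_mul]
    have : (∫ p, ζ (π (Fin.last n)) p * ζ j.castSucc p ∂μ) = m j (π (Fin.last n)) := by
      rw [hm]
      exact integral_congr_ae (Filter.Eventually.of_forall fun y => mul_comm _ _)
    rw [this]
    ring
  simp_rw [hterm]
  rw [← Finset.mul_sum]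
  -- the remaining sum is the determinant of a matrix with two equal rows
  set N : Matrix (Fin (n+1)) (Fin (n+1)) ℂ :=
    Matrix.of fun r ℓ => Fin.lastCases (m j ℓ) (fun i => m i ℓ) r with hN
  have hdet : Matrix.det Nᵀ = ∑ π : Equiv.Perm (Fin (n+1)),
      ((Equiv.Perm.sign π : ℤ) : ℂ)
        * ((∏ i : Fin n, m i (π i.castSucc)) * m j (π (Fin.last n))) := by
    rw [Matrix.det_apply']
    refine Finset.sum_congr rfl fun π _ => ?_
    rw [Fin.prod_univ_castSucc (f := fun r => Nᵀ (π r) r)]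
    simp [hN, Matrix.transpose_apply]
  have hzero : Matrix.det Nᵀ = 0 := by
    rw [Matrix.det_transpose]
    refine Matrix.det_zero_of_row_eq (Fin.castSucc_lt_last j).ne ?_
    funext ℓ
    simp [hN]
  rw [← hdet, hzero, mul_zero]
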